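/- Let 0 < b_c < a_c, k₀ > 0, k₁ ∈ (−b_c², 0), and with a_e = √(a_c² + k₀), b_e = √(b_c² + k₀), a_{h1} = √(a_c² + k₁), b_{h1} = √(b_c² + k₁), k₂(t) = −(a_c² sin²t + b_c² cos²t), consider the curve e(t) = ((a_e a_{h1}/a_c)·cos t, (b_e b_{h1}/b_c)·sin t, √(k₀ k₁ k₂(t))/(a_c b_c)). Then for every t with sin t · cos t ≠ 0, e is differentiable at t and the squared norm of its derivative equals ‖e′(t)‖² = (k₀ − k₂(t))·(k₁ − k₂(t)) / (−k₂(t)). -/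

import Mathlib

open Real

/-- The squared speed of the line of curvature `e = ℰ ∩ ℋ₁`:
`‖e′(t)‖² = (k₀ − k₂(t))(k₁ − k₂(t))/(−k₂(t))` wherever `sin t · cos t ≠ 0`. -/
theorem stmt15 (ac bc k0 k1 : ℝ) (hbc : 0 < bc) (hba : bc < ac)
    (hk0 : 0 < k0) (hk1 : k1 ∈ Set.Ioo (-bc ^ 2) 0)
    (ae be ah1 bh1 : ℝ)
    (hae : ae = Real.sqrt (ac ^ 2 + k0)) (hbe : be = Real.sqrt (bc ^ 2 + k0))
    (hah1 : ah1 = Real.sqrt (ac ^ 2 + k1))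
    (hbh1 : bh1 = Real.sqrt (bc ^ 2 + k1))
    (k2 : ℝ → ℝ)
    (hk2 : ∀ t, k2 t = -(ac ^ 2 * sin t ^ 2 + bc ^ 2 * cos t ^ 2))
    (e : ℝ → EuclideanSpace ℝ (Fin 3))
    (he : ∀ t, e t = ![ae * ah1 / ac * cos t, be * bh1 / bc * sin t,
      Real.sqrt (k0 * k1 * k2 t) / (ac * bc)]) :
    ∀ t : ℝ, sin t * cos t ≠ 0 →
      DifferentiableAt ℝ e t ∧
      ‖deriv e t‖ ^ 2 = (k0 - k2 t) * (k1 - k2 t) / (-k2 t) := by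
  obtain ⟨hk1l, hk1r⟩ := hk1
  intro t ht
  have hs : sin t ≠ 0 := fun h => ht (by simp [h])
  have hc : cos t ≠ 0 := fun h => ht (by simp [h])
  have hac : (0:ℝ) < ac := hbc.trans hba
  have hsc : sin t ^ 2 + cos t ^ 2 = 1 := sin_sq_add_cos_sq t
  have hs2 : 0 < sin t ^ 2 := by positivity
  have hc2 : 0 < cos t ^ 2 := by positivity
  have hM : 0 < ac ^ 2 * sin t ^ 2 + bc ^ 2 * cos t ^ 2 := by positivity
  have hk2t : k2 t = -(ac ^ 2 * sin t ^ 2 + bc ^ 2 * cos t ^ 2) := hk2 t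
  have hk2neg : k2 t < 0 := by rw [hk2t]; linarith
  have hu : 0 < k0 * k1 * k2 t := by
    have : 0 < k1 * k2 t := mul_pos_of_neg_of_neg hk1r hk2neg
    calc (0:ℝ) < k0 * (k1 * k2 t) := mul_pos hk0 this
      _ = k0 * k1 * k2 t := by ring
  have hw2 : Real.sqrt (k0 * k1 * k2 t) ^ 2 = k0 * k1 * k2 t := Real.sq_sqrt hu.le
  have hwpos : 0 < Real.sqrt (k0 * k1 * k2 t) := Real.sqrt_pos.mpr hu
  -- squares of the parameters
  have hae2 : ae ^ 2 = ac ^ 2 + k0 := by rw [hae]; exact Real.sq_sqrt (by positivity)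
  have hbe2 : be ^ 2 = bc ^ 2 + k0 := by rw [hbe]; exact Real.sq_sqrt (by positivity)
  have hah2 : ah1 ^ 2 = ac ^ 2 + k1 := by
    rw [hah1]; exact Real.sq_sqrt (by nlinarith)
  have hbh2 : bh1 ^ 2 = bc ^ 2 + k1 := by
    rw [hbh1]; exact Real.sq_sqrt (by nlinarith)
  -- derivative of k2
  have hk2f : k2 = fun t => -(ac ^ 2 * sin t ^ 2 + bc ^ 2 * cos t ^ 2) := funext hk2
  have hdk2 : HasDerivAt k2 (-(2 * (ac ^ 2 - bc ^ 2) * sin t * cos t)) t := by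
    rw [hk2f]
    have h1 : HasDerivAt (fun t : ℝ => sin t ^ 2) (2 * sin t * cos t) t := by
      simpa using (hasDerivAt_sin t).fun_pow 2
    have h2 : HasDerivAt (fun t : ℝ => cos t ^ 2) (2 * cos t * (-sin t)) t := by
      simpa using (hasDerivAt_cos t).fun_pow 2
    have := ((h1.const_mul (ac ^ 2)).fun_add (h2.const_mul (bc ^ 2))).fun_neg
    refine this.congr_deriv ?_
    ring
  have hdu : HasDerivAt (fun t => k0 * k1 * k2 t)
      (k0 * k1 * -(2 * (ac ^ 2 - bc ^ 2) * sin t * cos t)) t := hdk2.const_mul _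
  have hdw : HasDerivAt (fun t => Real.sqrt (k0 * k1 * k2 t))
      (k0 * k1 * -(2 * (ac ^ 2 - bc ^ 2) * sin t * cos t) /
        (2 * Real.sqrt (k0 * k1 * k2 t))) t := hdu.sqrt hu.ne'
  set v3 : ℝ := k0 * k1 * -(2 * (ac ^ 2 - bc ^ 2) * sin t * cos t) /
      (2 * Real.sqrt (k0 * k1 * k2 t)) / (ac * bc) with hv3
  have hd3 : HasDerivAt (fun t => Real.sqrt (k0 * k1 * k2 t) / (ac * bc)) v3 t :=
    hdw.div_const _
  have hd1 : HasDerivAt (fun t => ae * ah1 / ac * cos t) (-(ae * ah1 / ac) * sin t) t := by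
    simpa [mul_comm, mul_neg, neg_mul] using (hasDerivAt_cos t).const_mul (ae * ah1 / ac)
  have hd2 : HasDerivAt (fun t => be * bh1 / bc * sin t) (be * bh1 / bc * cos t) t :=
    (hasDerivAt_sin t).const_mul _
  -- assemble
  set f : ℝ → Fin 3 → ℝ := fun t => ![ae * ah1 / ac * cos t, be * bh1 / bc * sin t,
      Real.sqrt (k0 * k1 * k2 t) / (ac * bc)] with hf
  set v : Fin 3 → ℝ := ![-(ae * ah1 / ac) * sin t, be * bh1 / bc * cos t, v3] with hv
  have hdf : HasDerivAt f v t := by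
    rw [hasDerivAt_pi]
    intro i
    fin_cases i
    · simpa [hf, hv] using hd1
    · simpa [hf, hv] using hd2
    · simpa [hf, hv] using hd3
  set L : (Fin 3 → ℝ) ≃L[ℝ] EuclideanSpace ℝ (Fin 3) :=
    (PiLp.continuousLinearEquiv 2 ℝ (fun _ : Fin 3 => ℝ)).symm with hL
  have heL : e = fun t => L (f t) := by
    funext x
    apply WithLp.ofLp_injective 2
    rw [he x]
    rfl
  have hde : HasDerivAt e (L (v)) t := by
    rw [heL]
    exact (L.toContinuousLinearMap.hasFDerivAt).comp_hasDerivAt t hdf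
  refine ⟨hde.differentiableAt, ?_⟩
  rw [hde.deriv]
  have hnorm : ‖(L v : EuclideanSpace ℝ (Fin 3))‖ ^ 2
      = (-(ae * ah1 / ac) * sin t) ^ 2 + (be * bh1 / bc * cos t) ^ 2 + v3 ^ 2 := by
    rw [EuclideanSpace.norm_eq, Real.sq_sqrt (by positivity)]
    have : ∀ i : Fin 3, (L v : EuclideanSpace ℝ (Fin 3)) i = v i := fun i => rfl
    simp only [this]
    rw [Fin.sum_univ_three]
    simp only [hv, Matrix.cons_val_zero, Matrix.cons_val_one, Matrix.head_cons,
      Matrix.cons_val_two, Matrix.tail_cons, Real.norm_eq_abs, sq_abs]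
  rw [hnorm]
  -- algebra
  have E1 : (-(ae * ah1 / ac) * sin t) ^ 2
      = (ac ^ 2 + k0) * (ac ^ 2 + k1) / ac ^ 2 * sin t ^ 2 := by
    rw [← hae2, ← hah2]; ring
  have E2 : (be * bh1 / bc * cos t) ^ 2
      = (bc ^ 2 + k0) * (bc ^ 2 + k1) / bc ^ 2 * cos t ^ 2 := by
    rw [← hbe2, ← hbh2]; ring
  have E3 : v3 ^ 2 = -(k0 * k1) * (ac ^ 2 - bc ^ 2) ^ 2 * sin t ^ 2 * cos t ^ 2 /
      ((ac ^ 2 * sin t ^ 2 + bc ^ 2 * cos t ^ 2) * ac ^ 2 * bc ^ 2) := by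
    have step : v3 ^ 2 = (k0 * k1 * (2 * (ac ^ 2 - bc ^ 2) * sin t * cos t)) ^ 2 /
        (4 * Real.sqrt (k0 * k1 * k2 t) ^ 2 * (ac * bc) ^ 2) := by
      rw [hv3]; ring
    rw [step, hw2]
    have hden : (0:ℝ) < 4 * (k0 * k1 * k2 t) * (ac * bc) ^ 2 :=
      mul_pos (mul_pos (by norm_num) hu) (by positivity)
    rw [div_eq_div_iff hden.ne' (by positivity)]
    rw [hk2t]; ring
  rw [E1, E2, E3, hk2t]
  have hcc : cos t ^ 2 = 1 - sin t ^ 2 := by linarith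
  rw [hcc]
  have hM' : ac ^ 2 * sin t ^ 2 + bc ^ 2 * (1 - sin t ^ 2) ≠ 0 := by
    rw [← hcc]; exact hM.ne'
  field_simp
  ring
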